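/- For every integer n ≥ 2, the free group of rank n has uncountably many conjugacy classes of maximal subgroups of infinite index. -/

import Mathlib

/-- Conjugacy of subgroups (restricted to those satisfying a property `P`). -/
def conjRel {G : Type*} [Group G] (P : Subgroup G → Prop)
    (M N : {M : Subgroup G // P M}) : Prop :=
  ∃ g : G, (N : Subgroup G) = Subgroup.map (MulAut.conj g).toMonoidHom (M : Subgroup G)

namespace FGMaxAux

/-! ### The permutations -/

/-- positions of the encoding transpositions -/
def pk (k : ℕ) : ℤ := 4 * (k + 1)

lemma pk_ge (k : ℕ) : 4 ≤ pk k := by simp only [pk]; omega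

/-- The underlying function of the permutation `b_S`: the transposition `(0 1)` together
with transpositions `(pk k, pk k + 1)` for `k ∈ S`. -/
noncomputable def bfun (S : Set ℕ) (x : ℤ) : ℤ :=
  open scoped Classical in
  if x = 0 then 1 else if x = 1 then 0
  else if ∃ k ∈ S, x = pk k then x + 1
  else if ∃ k ∈ S, x = pk k + 1 then x - 1
  else x

lemma bfun_zero (S : Set ℕ) : bfun S 0 = 1 := by simp [bfun]

lemma bfun_one (S : Set ℕ) : bfun S 1 = 0 := by simp [bfun]

lemma bfun_fix (S : Set ℕ) {x : ℤ} (h0 : x ≠ 0) (h1 : x ≠ 1)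
    (h2 : ¬ ∃ k ∈ S, x = pk k) (h3 : ¬ ∃ k ∈ S, x = pk k + 1) : bfun S x = x := by
  unfold bfun
  rw [if_neg h0, if_neg h1, if_neg h2, if_neg h3]

lemma bfun_of_mod (S : Set ℕ) {x : ℤ} (h0 : x ≠ 0) (h1 : x ≠ 1)
    (h : x % 4 = 2 ∨ x % 4 = 3) : bfun S x = x := by
  apply bfun_fix S h0 h1
  · rintro ⟨k, -, rfl⟩; simp only [pk] at h; omega
  · rintro ⟨k, -, hx⟩; rw [hx] at h; simp only [pk] at h; omega

lemma bfun_neg (S : Set ℕ) {x : ℤ} (h : x < 0) : bfun S x = x := by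
  apply bfun_fix S (by omega) (by omega)
  · rintro ⟨k, -, rfl⟩; have := pk_ge k; omega
  · rintro ⟨k, -, hx⟩; have := pk_ge k; omega

lemma bfun_pk_mem (S : Set ℕ) {k : ℕ} (hk : k ∈ S) : bfun S (pk k) = pk k + 1 := by
  have h4 := pk_ge k
  unfold bfun
  rw [if_neg (by omega), if_neg (by omega), if_pos ⟨k, hk, rfl⟩]

lemma pk_injective : Function.Injective pk := by
  intro a b hab; simp only [pk] at hab; omega

lemma bfun_pk_not (S : Set ℕ) {k : ℕ} (hk : k ∉ S) : bfun S (pk k) = pk k := by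
  have h4 := pk_ge k
  apply bfun_fix S (by omega) (by omega)
  · rintro ⟨j, hj, hx⟩
    exact hk (pk_injective hx ▸ hj)
  · rintro ⟨j, -, hx⟩; simp only [pk] at hx; omega

lemma bfun_pk1_mem (S : Set ℕ) {k : ℕ} (hk : k ∈ S) : bfun S (pk k + 1) = pk k := by
  have h4 := pk_ge k
  unfold bfun
  rw [if_neg (by omega), if_neg (by omega),
    if_neg (by rintro ⟨j, -, hx⟩; simp only [pk] at hx; omega),
    if_pos ⟨k, hk, rfl⟩]
  omega

lemma bfun_invol (S : Set ℕ) (x : ℤ) : bfun S (bfun S x) = x := by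
  by_cases h0 : x = 0
  · subst h0; rw [bfun_zero, bfun_one]
  by_cases h1 : x = 1
  · subst h1; rw [bfun_one, bfun_zero]
  by_cases h2 : ∃ k ∈ S, x = pk k
  · obtain ⟨k, hk, rfl⟩ := h2
    rw [bfun_pk_mem S hk, bfun_pk1_mem S hk]
  by_cases h3 : ∃ k ∈ S, x = pk k + 1
  · obtain ⟨k, hk, rfl⟩ := h3
    rw [bfun_pk1_mem S hk, bfun_pk_mem S hk]
  · rw [bfun_fix S h0 h1 h2 h3, bfun_fix S h0 h1 h2 h3]

/-- The permutation `b_S`. -/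
noncomputable def bS (S : Set ℕ) : Equiv.Perm ℤ :=
  ⟨bfun S, bfun S, bfun_invol S, bfun_invol S⟩

@[simp] lemma bS_apply (S : Set ℕ) (x : ℤ) : bS S x = bfun S x := rfl

/-- The shift permutation. -/
def aZ : Equiv.Perm ℤ :=
  ⟨fun x => x + 1, fun x => x - 1, fun x => by simp, fun x => by simp⟩

@[simp] lemma aZ_apply (x : ℤ) : aZ x = x + 1 := rfl

@[simp] lemma aZ_inv_apply (x : ℤ) : aZ⁻¹ x = x - 1 := rfl

lemma aZ_zpow (m : ℤ) : ∀ x : ℤ, (aZ ^ m) x = x + m := by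
  induction m using Int.induction_on with
  | zero => intro x; simp
  | succ i ih =>
    intro x
    rw [zpow_add_one, Equiv.Perm.mul_apply, aZ_apply, ih]; ring
  | pred i ih =>
    intro x
    rw [zpow_sub_one, Equiv.Perm.mul_apply, aZ_inv_apply, ih]; ring

/-! ### The homomorphism from the free group -/

/-- The action homomorphism. -/
noncomputable def phi (S : Set ℕ) (n : ℕ) : FreeGroup (Fin n) →* Equiv.Perm ℤ :=
  FreeGroup.lift (fun i => if (i : ℕ) = 0 then aZ else if (i : ℕ) = 1 then bS S else 1)

/-- First generator. -/
def g0 (n : ℕ) (hn : 2 ≤ n) : FreeGroup (Fin n) := FreeGroup.of ⟨0, by omega⟩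

/-- Second generator. -/
def g1 (n : ℕ) (hn : 2 ≤ n) : FreeGroup (Fin n) := FreeGroup.of ⟨1, by omega⟩

lemma phi_g0 (S : Set ℕ) (n : ℕ) (hn : 2 ≤ n) : phi S n (g0 n hn) = aZ := by
  simp [phi, g0]

lemma phi_g1 (S : Set ℕ) (n : ℕ) (hn : 2 ≤ n) : phi S n (g1 n hn) = bS S := by
  simp [phi, g1]

/-- The word mapping to the conjugated transposition `t_m = a^m b a^{-m}`. -/
def WT (n : ℕ) (hn : 2 ≤ n) (m : ℤ) : FreeGroup (Fin n) :=
  g0 n hn ^ m * g1 n hn * g0 n hn ^ (-m)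

lemma phi_WT (S : Set ℕ) (n : ℕ) (hn : 2 ≤ n) (m x : ℤ) :
    phi S n (WT n hn m) x = bfun S (x - m) + m := by
  simp only [WT, map_mul, map_zpow, phi_g0, phi_g1, Equiv.Perm.mul_apply]
  rw [aZ_zpow, bS_apply, aZ_zpow, ← sub_eq_add_neg]

/-- The value map of `t_m`. -/
noncomputable def Tv (S : Set ℕ) (m x : ℤ) : ℤ := bfun S (x - m) + m

lemma phi_WT' (S : Set ℕ) (n : ℕ) (hn : 2 ≤ n) (m x : ℤ) :
    phi S n (WT n hn m) x = Tv S m x := phi_WT S n hn m x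

/-- The subgroup: stabilizer of `0` under the action through `phi`. -/
noncomputable def MM (S : Set ℕ) (n : ℕ) : Subgroup (FreeGroup (Fin n)) :=
  (MulAction.stabilizer (Equiv.Perm ℤ) (0 : ℤ)).comap (phi S n)

lemma mem_MM (S : Set ℕ) (n : ℕ) (w : FreeGroup (Fin n)) :
    w ∈ MM S n ↔ phi S n w 0 = 0 := by
  simp [MM, Subgroup.mem_comap, MulAction.mem_stabilizer_iff, Equiv.Perm.smul_def]

/-! ### Transitivity of the stabilizer on the complement of `0` -/

lemma exists_pos (S : Set ℕ) (n : ℕ) (hn : 2 ≤ n) (x : ℤ) (hx : 1 ≤ x) :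
    ∃ w : FreeGroup (Fin n), phi S n w 0 = 0 ∧ phi S n w x = 1 := by
  refine Int.le_induction
    (motive := fun y _ => ∃ w : FreeGroup (Fin n), phi S n w 0 = 0 ∧ phi S n w y = 1) ?_ ?_ x hx
  · exact ⟨1, by simp, by simp⟩
  · intro x hx ih
    obtain ⟨w, hw0, hwx⟩ := ih
    refine ⟨w * WT n hn x, ?_, ?_⟩
    · rw [map_mul, Equiv.Perm.mul_apply, phi_WT, zero_sub, bfun_neg S (by omega)]
      simpa using hw0
    · rw [map_mul, Equiv.Perm.mul_apply, phi_WT, add_sub_cancel_left, bfun_one]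
      simpa using hwx

lemma exists_negstep (S : Set ℕ) (n : ℕ) (hn : 2 ≤ n) (m : ℤ) (hm : m ≤ -2) :
    ∃ w : FreeGroup (Fin n), phi S n w 0 = 0 ∧ phi S n w m = m + 1 := by
  by_cases hfix : bfun S (-m) = -m
  · refine ⟨WT n hn m, ?_, ?_⟩
    · rw [phi_WT, zero_sub, hfix]; ring
    · rw [phi_WT, sub_self, bfun_zero]; ring
  · have hcase : ∃ k ∈ S, -m = pk k ∨ -m = pk k + 1 := by
      by_contra hc
      push_neg at hc
      exact hfix (bfun_fix S (by omega) (by omega)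
        (by rintro ⟨k, hk, hx⟩; exact (hc k hk).1 hx)
        (by rintro ⟨k, hk, hx⟩; exact (hc k hk).2 hx))
    obtain ⟨k, hk, hcm⟩ := hcase
    have h4 := pk_ge k
    have hfix2 : bfun S (2 - m) = 2 - m := by
      apply bfun_of_mod S (by omega) (by omega)
      simp only [pk] at hcm
      omega
    have e1 : Tv S 0 0 = 1 := by rw [Tv, sub_zero, bfun_zero]; ring
    have e2 : Tv S 1 1 = 2 := by rw [Tv, sub_self, bfun_zero]; ring
    have e3 : Tv S m 2 = 2 := by rw [Tv, hfix2]; ring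
    have e4 : Tv S 1 2 = 1 := by
      rw [Tv, show (2 : ℤ) - 1 = 1 by ring, bfun_one]; ring
    have e5 : Tv S 0 1 = 0 := by rw [Tv, sub_zero, bfun_one]; ring
    have f1 : Tv S 0 m = m := by rw [Tv, sub_zero, bfun_neg S (by omega)]; ring
    have f2 : Tv S 1 m = m := by rw [Tv, bfun_neg S (by omega)]; ring
    have f3 : Tv S m m = m + 1 := by rw [Tv, sub_self, bfun_zero]; ring
    have f4 : Tv S 1 (m + 1) = m + 1 := by
      rw [Tv, add_sub_cancel_right, bfun_neg S (by omega)]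
    have f5 : Tv S 0 (m + 1) = m + 1 := by
      rw [Tv, sub_zero, bfun_neg S (by omega)]; ring
    refine ⟨WT n hn 0 * WT n hn 1 * WT n hn m * WT n hn 1 * WT n hn 0, ?_, ?_⟩
    · simp only [map_mul, Equiv.Perm.mul_apply, phi_WT']
      rw [e1, e2, e3, e4, e5]
    · simp only [map_mul, Equiv.Perm.mul_apply, phi_WT']
      rw [f1, f2, f3, f4, f5]

lemma exists_neg (S : Set ℕ) (n : ℕ) (hn : 2 ≤ n) (x : ℤ) (hx : x ≤ -1) :
    ∃ w : FreeGroup (Fin n), phi S n w 0 = 0 ∧ phi S n w x = -1 := by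
  obtain ⟨d, rfl⟩ : ∃ d : ℕ, x = -1 - d := ⟨(-1 - x).toNat, by omega⟩
  clear hx
  induction d with
  | zero => exact ⟨1, by simp, by simp⟩
  | succ d ih =>
    obtain ⟨w, hw0, hwx⟩ := ih
    obtain ⟨u, hu0, hum⟩ := exists_negstep S n hn (-1 - (d + 1 : ℕ)) (by push_cast; omega)
    refine ⟨w * u, ?_, ?_⟩
    · rw [map_mul, Equiv.Perm.mul_apply, hu0, hw0]
    · rw [map_mul, Equiv.Perm.mul_apply, hum,
        show (-1 - (d + 1 : ℕ) + 1 : ℤ) = -1 - d by push_cast; ring, hwx]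

lemma exists_cross (S : Set ℕ) (n : ℕ) (hn : 2 ≤ n) :
    ∃ w : FreeGroup (Fin n), phi S n w 0 = 0 ∧ phi S n w (-1) = 1 := by
  have hb2 : bfun S 2 = 2 := bfun_of_mod S (by omega) (by omega) (by omega)
  have e1 : Tv S 0 0 = 1 := by rw [Tv, sub_zero, bfun_zero]; ring
  have e2 : Tv S (-1) 1 = 1 := by rw [Tv, show (1 : ℤ) - -1 = 2 by ring, hb2]; ring
  have e3 : Tv S 0 1 = 0 := by rw [Tv, sub_zero, bfun_one]; ring
  have f1 : Tv S 0 (-1) = -1 := by rw [Tv, sub_zero, bfun_neg S (by omega)]; ring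
  have f2 : Tv S (-1) (-1) = 0 := by
    rw [Tv, show (-1 : ℤ) - -1 = 0 by ring, bfun_zero]; ring
  have f3 : Tv S 0 0 = 1 := e1
  refine ⟨WT n hn 0 * WT n hn (-1) * WT n hn 0, ?_, ?_⟩
  · simp only [map_mul, Equiv.Perm.mul_apply, phi_WT']
    rw [e1, e2, e3]
  · simp only [map_mul, Equiv.Perm.mul_apply, phi_WT']
    rw [f1, f2, f3]

lemma exists_toone (S : Set ℕ) (n : ℕ) (hn : 2 ≤ n) (x : ℤ) (hx : x ≠ 0) :
    ∃ w : FreeGroup (Fin n), phi S n w 0 = 0 ∧ phi S n w x = 1 := by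
  rcases lt_or_gt_of_ne hx with h | h
  · obtain ⟨w, hw0, hwx⟩ := exists_neg S n hn x (by omega)
    obtain ⟨wc, hwc0, hwc⟩ := exists_cross S n hn
    refine ⟨wc * w, ?_, ?_⟩
    · rw [map_mul, Equiv.Perm.mul_apply, hw0, hwc0]
    · rw [map_mul, Equiv.Perm.mul_apply, hwx, hwc]
  · exact exists_pos S n hn x (by omega)

/-! ### The subgroup is maximal of infinite index and distinguishes `S` -/

lemma MM_coatom (S : Set ℕ) (n : ℕ) (hn : 2 ≤ n) : IsCoatom (MM S n) := by
  constructor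
  · intro htop
    have hg : g0 n hn ∈ MM S n := htop ▸ Subgroup.mem_top _
    rw [mem_MM, phi_g0] at hg
    simp at hg
  · intro H hH
    obtain ⟨h, hhH, hhM⟩ := SetLike.exists_of_lt hH
    have hx : phi S n h 0 ≠ 0 := fun e => hhM ((mem_MM S n h).2 e)
    rw [eq_top_iff]
    intro g _
    by_cases hy : phi S n g 0 = 0
    · exact hH.le ((mem_MM S n g).2 hy)
    obtain ⟨m1, hm10, hm1x⟩ := exists_toone S n hn _ hx
    obtain ⟨m2, hm20, hm2y⟩ := exists_toone S n hn _ hy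
    have hm1H : m1 ∈ H := hH.le ((mem_MM S n m1).2 hm10)
    have hm2H : m2 ∈ H := hH.le ((mem_MM S n m2).2 hm20)
    have key : phi S n (m2⁻¹ * (m1 * h)) 0 = phi S n g 0 := by
      rw [map_mul, map_mul, map_inv, Equiv.Perm.mul_apply, Equiv.Perm.mul_apply,
        hm1x, ← hm2y, ← Equiv.Perm.mul_apply, inv_mul_cancel, Equiv.Perm.one_apply]
    have hmem : (m2⁻¹ * (m1 * h))⁻¹ * g ∈ MM S n := by
      rw [mem_MM, map_mul, map_inv, Equiv.Perm.mul_apply, ← key,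
        ← Equiv.Perm.mul_apply, inv_mul_cancel, Equiv.Perm.one_apply]
    have : g = (m2⁻¹ * (m1 * h)) * ((m2⁻¹ * (m1 * h))⁻¹ * g) := by group
    rw [this]
    exact mul_mem (mul_mem (inv_mem hm2H) (mul_mem hm1H hhH)) (hH.le hmem)

lemma MM_infinite (S : Set ℕ) (n : ℕ) (hn : 2 ≤ n) :
    Infinite (FreeGroup (Fin n) ⧸ MM S n) := by
  apply Infinite.of_injective
    (fun z : ℤ => (QuotientGroup.mk (g0 n hn ^ z) : FreeGroup (Fin n) ⧸ MM S n))
  intro z z' h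
  rw [QuotientGroup.eq, ← zpow_neg, ← zpow_add, mem_MM, map_zpow, phi_g0, aZ_zpow] at h
  omega

lemma MM_probe (S : Set ℕ) (n : ℕ) (hn : 2 ≤ n) (k : ℕ) :
    WT n hn (-(pk k)) ∈ MM S n ↔ k ∉ S := by
  rw [mem_MM, phi_WT, zero_sub, neg_neg]
  by_cases hk : k ∈ S
  · rw [bfun_pk_mem S hk]
    simp [hk]
  · rw [bfun_pk_not S hk]
    simp [hk]

lemma MM_inj (n : ℕ) (hn : 2 ≤ n) : Function.Injective (fun S : Set ℕ => MM S n) := by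
  intro S S' hSS
  ext k
  have h1 := MM_probe S n hn k
  have h2 := MM_probe S' n hn k
  simp only at hSS
  rw [hSS] at h1
  tauto

/-! ### conjRel is an equivalence, with countable classes -/

lemma mem_conjMap {G : Type*} [Group G] (g : G) (M : Subgroup G) (x : G) :
    x ∈ Subgroup.map (MulAut.conj g).toMonoidHom M ↔ g⁻¹ * x * g ∈ M := by
  rw [Subgroup.mem_map_equiv]
  simp [MulAut.conj]

lemma conjRel_equivalence {G : Type*} [Group G] (P : Subgroup G → Prop) :
    Equivalence (conjRel P) := by
  constructor
  · intro M
    exact ⟨1, by ext x; simp [mem_conjMap]⟩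
  · rintro M N ⟨g, hg⟩
    refine ⟨g⁻¹, ?_⟩
    ext x
    rw [mem_conjMap, hg, mem_conjMap]
    simp [mul_assoc]
  · rintro A B C ⟨g, hg⟩ ⟨h, hh⟩
    refine ⟨h * g, ?_⟩
    ext x
    rw [hh, mem_conjMap, hg, mem_conjMap, mem_conjMap]
    simp [mul_assoc]

end FGMaxAux

theorem freeGroup_uncountably_many_maximal_infinite_index (n : ℕ) (hn : 2 ≤ n) :
    Uncountable (Quot (conjRel (fun M : Subgroup (FreeGroup (Fin n)) =>
      IsCoatom M ∧ Infinite (FreeGroup (Fin n) ⧸ M)))) := by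
  classical
  set P := fun M : Subgroup (FreeGroup (Fin n)) =>
    IsCoatom M ∧ Infinite (FreeGroup (Fin n) ⧸ M) with hP
  haveI : Uncountable (Set ℕ) := by
    rw [← not_countable_iff]
    intro h
    obtain ⟨f, hf⟩ := exists_surjective_nat (Set ℕ)
    exact Function.cantor_surjective f hf
  have hPM : ∀ S : Set ℕ, P (FGMaxAux.MM S n) := fun S =>
    ⟨FGMaxAux.MM_coatom S n hn, FGMaxAux.MM_infinite S n hn⟩
  have hΦ : Function.Injective (fun S : Set ℕ =>
      (⟨FGMaxAux.MM S n, hPM S⟩ : {M : Subgroup (FreeGroup (Fin n)) // P M})) := by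
    intro S S' h
    exact FGMaxAux.MM_inj n hn (congrArg Subtype.val h)
  haveI hU : Uncountable {M : Subgroup (FreeGroup (Fin n)) // P M} := hΦ.uncountable
  by_contra hC
  rw [not_uncountable_iff] at hC
  haveI := hC
  haveI : Countable (FreeGroup (Fin n)) := FreeGroup.toWord_injective.countable
  set q : {M : Subgroup (FreeGroup (Fin n)) // P M} → Quot (conjRel P) :=
    Quot.mk (conjRel P) with hq
  have hrep : ∀ M : {M : Subgroup (FreeGroup (Fin n)) // P M},
      ∃ g : FreeGroup (Fin n), (M : Subgroup (FreeGroup (Fin n))) =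
        Subgroup.map (MulAut.conj g).toMonoidHom ((q M).out : Subgroup (FreeGroup (Fin n))) := by
    intro M
    have h1 : q ((q M).out) = q M := Quot.out_eq _
    exact ((FGMaxAux.conjRel_equivalence P).eqvGen_iff).1 (Quot.eq.1 h1)
  have hJ : Function.Injective (fun M : {M : Subgroup (FreeGroup (Fin n)) // P M} =>
      ((q M, Classical.choose (hrep M)) : Quot (conjRel P) × FreeGroup (Fin n))) := by
    intro M M' h
    simp only [Prod.mk.injEq] at h
    obtain ⟨h1, h2⟩ := h
    apply Subtype.ext
    have hout : (q M).out = (q M').out := by rw [h1]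
    calc (M : Subgroup (FreeGroup (Fin n)))
        = Subgroup.map (MulAut.conj (Classical.choose (hrep M))).toMonoidHom
            ((q M).out : Subgroup (FreeGroup (Fin n))) := Classical.choose_spec (hrep M)
      _ = Subgroup.map (MulAut.conj (Classical.choose (hrep M'))).toMonoidHom
            ((q M').out : Subgroup (FreeGroup (Fin n))) := by rw [h2, hout]
      _ = (M' : Subgroup (FreeGroup (Fin n))) := (Classical.choose_spec (hrep M')).symm
  exact not_countable hJ.countable
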